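/- For any 2×2 real matrix A and any 2×2 orthogonal matrix Q, rank(E(QᵀAQ) + (E(QᵀAQ))ᵀ) = rank(EA + (EA)ᵀ), where E = [[0,-1],[1,0]]. -/

import Mathlib

open Matrix

lemma symplectic_conj (B : Matrix (Fin 2) (Fin 2) ℝ) :
    Bᵀ * (!![0, -1; 1, 0] : Matrix (Fin 2) (Fin 2) ℝ) * B =
      B.det • (!![0, -1; 1, 0] : Matrix (Fin 2) (Fin 2) ℝ) := by
  ext i j
  fin_cases i <;> fin_cases j <;>
    simp [Matrix.mul_apply, Fin.sum_univ_two, Matrix.det_fin_two] <;> ring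

lemma rank_smul_eq (c : ℝ) (hc : c ≠ 0) (B : Matrix (Fin 2) (Fin 2) ℝ) :
    (c • B).rank = B.rank := by
  have h : c • B = (c • (1 : Matrix (Fin 2) (Fin 2) ℝ)) * B := by
    rw [Matrix.smul_mul, one_mul]
  rw [h, Matrix.rank_mul_eq_right_of_isUnit_det]
  simpa [Matrix.det_smul] using (Ne.isUnit hc).pow 2

/-- The skew-symmetric rank is invariant under orthogonal conjugation. -/
theorem rank_skw_orthogonal_conj (A Q : Matrix (Fin 2) (Fin 2) ℝ)
    (hQ : Q * Qᵀ = 1) :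
    ((!![0, -1; 1, 0] : Matrix (Fin 2) (Fin 2) ℝ) * (Qᵀ * A * Q) +
      ((!![0, -1; 1, 0] : Matrix (Fin 2) (Fin 2) ℝ) * (Qᵀ * A * Q))ᵀ).rank =
    ((!![0, -1; 1, 0] : Matrix (Fin 2) (Fin 2) ℝ) * A +
      ((!![0, -1; 1, 0] : Matrix (Fin 2) (Fin 2) ℝ) * A)ᵀ).rank := by
  set E : Matrix (Fin 2) (Fin 2) ℝ := !![0, -1; 1, 0] with hE
  have hdet : IsUnit Q.det := by
    have : Q.det * Q.det = 1 := by
      have := congrArg Matrix.det hQ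
      simpa [Matrix.det_mul, Matrix.det_transpose] using this
    exact IsUnit.of_mul_eq_one _ this
  have hdetT : IsUnit Qᵀ.det := by simpa [Matrix.det_transpose] using hdet
  have hQ' : Qᵀ * Q = 1 := by
    calc Qᵀ * Q = Q⁻¹ * Q := by rw [Matrix.inv_eq_right_inv hQ]
      _ = 1 := Matrix.nonsing_inv_mul Q hdet
  have h2 : Q * E * Qᵀ = Q.det • E := by
    have := symplectic_conj Qᵀ
    rwa [Matrix.transpose_transpose, Matrix.det_transpose, ← hE] at this
  -- key: E * Qᵀ = det Q • (Qᵀ * E)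
  have hEQ : E * Qᵀ = Q.det • (Qᵀ * E) := by
    calc E * Qᵀ = Qᵀ * (Q * E * Qᵀ) := by
          rw [← Matrix.mul_assoc, ← Matrix.mul_assoc, hQ', one_mul]
      _ = Qᵀ * (Q.det • E) := by rw [h2]
      _ = Q.det • (Qᵀ * E) := by rw [Matrix.mul_smul]
  have hEQ2 : Q * Eᵀ = Q.det • (Eᵀ * Q) := by
    have := congrArg Matrix.transpose hEQ
    simpa [Matrix.transpose_mul, Matrix.transpose_smul] using this
  -- M(QᵀAQ) = det Q • (Qᵀ * M(A) * Q)
  have key : E * (Qᵀ * A * Q) + (E * (Qᵀ * A * Q))ᵀ =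
      Q.det • (Qᵀ * (E * A + (E * A)ᵀ) * Q) := by
    calc E * (Qᵀ * A * Q) + (E * (Qᵀ * A * Q))ᵀ
        = (E * Qᵀ) * A * Q + Qᵀ * Aᵀ * (Q * Eᵀ) := by
          simp [Matrix.transpose_mul, Matrix.mul_assoc]
      _ = (Q.det • (Qᵀ * E)) * A * Q + Qᵀ * Aᵀ * (Q.det • (Eᵀ * Q)) := by
          rw [hEQ, hEQ2]
      _ = Q.det • (Qᵀ * (E * A + (E * A)ᵀ) * Q) := by
          simp [Matrix.smul_mul, Matrix.mul_smul, Matrix.add_mul, Matrix.mul_add,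
            Matrix.transpose_mul, Matrix.mul_assoc, smul_add]
  rw [key, rank_smul_eq Q.det hdet.ne_zero,
    Matrix.rank_mul_eq_left_of_isUnit_det _ _ hdet,
    Matrix.rank_mul_eq_right_of_isUnit_det _ _ hdetT]
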